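/- Let X be a finite set of points in P^n over an algebraically closed field k with ideal I, and let d, e, f, g be distinct indices with d < e < f < g. Let T be a linear form in x_d and x_e. Assume x_g T ∈ I, x_f T ∉ I, and that the quadric F_{deg} = λ x_d x_e + μ x_d x_g + ν x_e x_g ∈ I has λ = 0 (i.e., F_{deg} ∈ (x_g)), and that square-free quadrics F_{dfg}, F_{efg} ∈ I exist whose coefficients satisfy the Koszul coefficient relation (-1)^d λ_{efg} + (-1)^{e-1} λ_{dfg} + (-1)^{f-2} λ_{deg} = 0 (coefficients on the 'first' monomial). Then λ_{dfg} = 0 and λ_{efg} = 0; i.e., F_{dfg} ∈ (x_g) and F_{efg} ∈ (x_g). -/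
import Mathlib


open MvPolynomial

/-- Lemma 5.2 (xgGxfG): if `x_g T ∈ I`, `x_f T ∉ I`, `F_{deg} ∈ (x_g)` (i.e. `λ_{deg} = 0`),
and the Koszul coefficient relation among the `λ`'s holds, then `F_{dfg}, F_{efg} ∈ (x_g)`,
i.e. `λ_{dfg} = 0` and `λ_{efg} = 0`. -/
theorem stmt_10 {k : Type*} [Field k] [IsAlgClosed k] (n : ℕ)
    (Xs : Finset (Fin (n + 1) → k))
    (d e f g : Fin (n + 1)) (hde : d < e) (hef : e < f) (hfg : f < g)
    (td te : k) (T : MvPolynomial (Fin (n + 1)) k)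
    (hT : T = C td * X d + C te * X e)
    (hgT : ∀ P ∈ Xs, eval P (X g * T) = 0)
    (hfT : ¬ ∀ P ∈ Xs, eval P (X f * T) = 0)
    (lam_deg mu_deg nu_deg lam_dfg mu_dfg nu_dfg lam_efg mu_efg nu_efg : k)
    (hFdeg : ∀ P ∈ Xs,
      eval P (C lam_deg * X d * X e + C mu_deg * X d * X g + C nu_deg * X e * X g) = 0)
    (hlam_deg : lam_deg = 0)
    (hFdfg : ∀ P ∈ Xs,
      eval P (C lam_dfg * X d * X f + C mu_dfg * X d * X g + C nu_dfg * X f * X g) = 0)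
    (hFefg : ∀ P ∈ Xs,
      eval P (C lam_efg * X e * X f + C mu_efg * X e * X g + C nu_efg * X f * X g) = 0)
    (hrel : (-1 : k) ^ (d : ℕ) * lam_efg - (-1 : k) ^ (e : ℕ) * lam_dfg
      + (-1 : k) ^ (f : ℕ) * lam_deg = 0) :
    lam_dfg = 0 ∧ lam_efg = 0 := by
  push_neg at hfT
  obtain ⟨P, hP, hPf⟩ := hfT
  have hg0 : P g = 0 := by
    have := hgT P hP
    simp [hT] at this hPf
    rcases this with h | h
    · exact h
    · exact absurd h hPf.2
  have hT0 : td * P d + te * P e ≠ 0 := by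
    simp [hT] at hPf; exact hPf.2
  have hf0 : P f ≠ 0 := by
    simp [hT] at hPf; exact hPf.1
  have h1 : lam_dfg * P d = 0 := by
    have := hFdfg P hP
    simp [hg0] at this
    rcases this with (h | h) | h
    · exact mul_eq_zero.mpr (Or.inl h)
    · exact mul_eq_zero.mpr (Or.inr h)
    · exact absurd h hf0
  have h2 : lam_efg * P e = 0 := by
    have := hFefg P hP
    simp [hg0] at this
    rcases this with (h | h) | h
    · exact mul_eq_zero.mpr (Or.inl h)
    · exact mul_eq_zero.mpr (Or.inr h)
    · exact absurd h hf0
  have hrel' : (-1 : k) ^ (d : ℕ) * lam_efg = (-1 : k) ^ (e : ℕ) * lam_dfg := by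
    rw [hlam_deg] at hrel; linear_combination hrel
  have hpow : ∀ m : ℕ, ((-1 : k) ^ m) ≠ 0 := fun m => pow_ne_zero m (by norm_num)
  rcases eq_or_ne (P d) 0 with hd | hd
  · have he : P e ≠ 0 := by
      intro he; apply hT0; rw [hd, he]; ring
    have l2 : lam_efg = 0 := by
      rcases mul_eq_zero.mp h2 with h | h
      · exact h
      · exact absurd h he
    refine ⟨?_, l2⟩
    rw [l2, mul_zero] at hrel'
    rcases mul_eq_zero.mp hrel'.symm with h | h
    · exact absurd h (hpow _)
    · exact h
  · have l1 : lam_dfg = 0 := by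
      rcases mul_eq_zero.mp h1 with h | h
      · exact h
      · exact absurd h hd
    refine ⟨l1, ?_⟩
    rw [l1, mul_zero] at hrel'
    rcases mul_eq_zero.mp hrel' with h | h
    · exact absurd h (hpow _)
    · exact h
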